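/- Let Θ̂₀ be a symmetric real N×N matrix with vᵀ Θ̂₀ v ≥ λ₀ ‖v‖₂² for all v ∈ ℝ^N, where λ₀ > 0; let η₀ > 0, 0 ≤ σ < λ₀, and σ′ ≥ 0. Let Θ̂ : [0,∞) → ℝ^{N×N} be continuous with ‖Θ̂(s) − Θ̂₀‖_op ≤ σ for all s ≥ 0, let a₀ ∈ ℝ^{m×N}, and let a : [0,∞) → ℝ^{m×N} be continuous with ‖a(s) − a₀‖_op ≤ σ′ for all s ≥ 0. Let g^{lin}, g : [0,∞) → ℝ^N be differentiable with (g^{lin})′(t) = −η₀ Θ̂₀ g^{lin}(t), g′(t) = −η₀ Θ̂(t) g(t), g^{lin}(0) = g(0), and let p^{lin}, p : [0,∞) → ℝ^m be differentiable with (p^{lin})′(t) = −η₀ a₀ g^{lin}(t), p′(t) = −η₀ a(t) g(t), p^{lin}(0) = p(0). Then for every t ≥ 0, ‖p^{lin}(t) − p(t)‖₂ ≤ ‖g(0)‖₂ · ( σ′/λ₀ + σ (‖a₀‖_op + σ′)/(λ₀ − σ)² ). -/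

import Mathlib

open Matrix
open scoped RealInnerProductSpace

/-- The Euclidean (ℓ²) norm of a vector in `ℝ^n`. -/
noncomputable def l2norm {n : ℕ} (v : Fin n → ℝ) : ℝ :=
  Real.sqrt (∑ i, v i ^ 2)

/-- The ℓ²→ℓ² operator norm of a real matrix. -/
noncomputable def l2OpNorm {m n : ℕ} (A : Matrix (Fin m) (Fin n) ℝ) : ℝ :=
  ‖(Matrix.toEuclideanLin A).toContinuousLinearMap‖

lemma wl_equiv_symm_sub {V : Type*} [AddCommGroup V] (p : ENNReal) (x y : V) :
    (WithLp.equiv p V).symm (x - y) = (WithLp.equiv p V).symm x - (WithLp.equiv p V).symm y := rfl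

lemma wl_equiv_symm_add {V : Type*} [AddCommGroup V] (p : ENNReal) (x y : V) :
    (WithLp.equiv p V).symm (x + y) = (WithLp.equiv p V).symm x + (WithLp.equiv p V).symm y := rfl

lemma wl_equiv_symm_neg {V : Type*} [AddCommGroup V] (p : ENNReal) (x : V) :
    (WithLp.equiv p V).symm (-x) = -(WithLp.equiv p V).symm x := rfl

lemma wl_equiv_symm_smul {V : Type*} [AddCommGroup V] [Module ℝ V] (p : ENNReal) (c : ℝ) (x : V) :
    (WithLp.equiv p V).symm (c • x) = c • (WithLp.equiv p V).symm x := rfl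

lemma aux_norm {n : ℕ} (v : Fin n → ℝ) :
    l2norm v = ‖(WithLp.equiv 2 (Fin n → ℝ)).symm v‖ := by
  rw [l2norm, EuclideanSpace.norm_eq]
  simp [Real.norm_eq_abs, sq_abs]

lemma aux_inner {n : ℕ} (u v : Fin n → ℝ) :
    u ⬝ᵥ v = ⟪(WithLp.equiv 2 (Fin n → ℝ)).symm u, (WithLp.equiv 2 (Fin n → ℝ)).symm v⟫ := by
  simp [PiLp.inner_apply, dotProduct, RCLike.inner_apply, mul_comm]

lemma aux_op {m n : ℕ} (A : Matrix (Fin m) (Fin n) ℝ) (v : Fin n → ℝ) :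
    ‖(WithLp.equiv 2 (Fin m → ℝ)).symm (A *ᵥ v)‖ ≤
      l2OpNorm A * ‖(WithLp.equiv 2 (Fin n → ℝ)).symm v‖ := by
  simp only [WithLp.equiv_symm_apply]
  rw [← Matrix.toEuclideanLin_apply_piLp_toLp, l2OpNorm]
  exact ((Matrix.toEuclideanLin A).toContinuousLinearMap).le_opNorm _

lemma aux_op_triangle {m n : ℕ} (A B : Matrix (Fin m) (Fin n) ℝ) :
    l2OpNorm A ≤ l2OpNorm B + l2OpNorm (A - B) := by
  have h : A = B + (A - B) := by abel
  calc l2OpNorm A = ‖(Matrix.toEuclideanLin (B + (A - B))).toContinuousLinearMap‖ := by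
        rw [l2OpNorm, ← h]
    _ ≤ _ := by
        rw [map_add, map_add]
        exact norm_add_le _ _

lemma aux_deriv {n : ℕ} (f : ℝ → (Fin n → ℝ)) (d : Fin n → ℝ) (t : ℝ)
    (h : HasDerivAt f d t) :
    HasDerivAt (fun s => (WithLp.equiv 2 (Fin n → ℝ)).symm (f s))
      ((WithLp.equiv 2 (Fin n → ℝ)).symm d) t := by
  have := ((PiLp.continuousLinearEquiv 2 ℝ (fun _ : Fin n => ℝ)).symm.toContinuousLinearMap.hasFDerivAt (x := f t)).comp_hasDerivAt t h
  exact this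

lemma gronwall_decay {E : Type*} [NormedAddCommGroup E] [InnerProductSpace ℝ E]
    (f : ℝ → E) (f' : ℝ → E) (c : ℝ)
    (hf : ∀ t : ℝ, 0 ≤ t → HasDerivAt f (f' t) t)
    (hdiss : ∀ t : ℝ, 0 ≤ t → ⟪f t, f' t⟫ ≤ -c * ‖f t‖ ^ 2) :
    ∀ t : ℝ, 0 ≤ t → ‖f t‖ ≤ Real.exp (-c * t) * ‖f 0‖ := by
  set φ : ℝ → ℝ := fun t => Real.exp (2 * c * t) * ⟪f t, f t⟫ with hφdef
  have hφ : ∀ t : ℝ, 0 ≤ t → HasDerivAt φ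
      (Real.exp (2 * c * t) * (2 * c) * ⟪f t, f t⟫
        + Real.exp (2 * c * t) * (⟪f t, f' t⟫ + ⟪f' t, f t⟫)) t := by
    intro t ht
    have h1 : HasDerivAt (fun t : ℝ => Real.exp (2 * c * t)) (Real.exp (2 * c * t) * (2 * c)) t := by
      simpa using ((hasDerivAt_id t).const_mul (2 * c)).exp
    exact h1.mul ((hf t ht).inner ℝ (hf t ht))
  have hanti : AntitoneOn φ (Set.Ici 0) := by
    apply antitoneOn_of_deriv_nonpos (convex_Ici 0)
    · exact fun x hx => ((hφ x hx).continuousAt).continuousWithinAt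
    · intro x hx
      rw [interior_Ici] at hx
      exact ((hφ x hx.le).differentiableAt).differentiableWithinAt
    · intro x hx
      rw [interior_Ici] at hx
      rw [(hφ x hx.le).deriv]
      have h2 := hdiss x hx.le
      have h3 : ⟪f' x, f x⟫ = ⟪f x, f' x⟫ := real_inner_comm _ _
      have h4 : ⟪f x, f x⟫ = ‖f x‖ ^ 2 := real_inner_self_eq_norm_sq _
      have he : (0:ℝ) < Real.exp (2 * c * x) := Real.exp_pos _
      rw [h3, h4]
      nlinarith [he]
  intro t ht
  have hmono := hanti Set.self_mem_Ici ht ht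
  have h4 : ∀ s, ⟪f s, f s⟫ = ‖f s‖ ^ 2 := fun s => real_inner_self_eq_norm_sq _
  simp only [hφdef, h4, mul_zero, Real.exp_zero, one_mul] at hmono
  have hmul : Real.exp (-c * t) * Real.exp (-c * t) * Real.exp (2 * c * t) = 1 := by
    rw [← Real.exp_add, ← Real.exp_add, show -c * t + -c * t + 2 * c * t = 0 by ring, Real.exp_zero]
  have key : ‖f t‖ ^ 2 ≤ (Real.exp (-c * t) * ‖f 0‖) ^ 2 := by
    nlinarith [hmono, Real.exp_pos (-c * t), Real.exp_pos (2 * c * t), sq_nonneg (‖f t‖)]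
  nlinarith [key, norm_nonneg (f t), mul_nonneg (Real.exp_nonneg (-c * t)) (norm_nonneg (f 0))]

lemma gronwall_linear {E : Type*} [NormedAddCommGroup E] [InnerProductSpace ℝ E]
    (f : ℝ → E) (f' : ℝ → E) (b B : ℝ → ℝ)
    (hf : ∀ t : ℝ, 0 ≤ t → HasDerivAt f (f' t) t)
    (hf0 : f 0 = 0)
    (hb : ∀ t : ℝ, 0 ≤ t → 0 ≤ b t)
    (hB : ∀ t : ℝ, 0 ≤ t → HasDerivAt B (b t) t)
    (hB0 : B 0 = 0)
    (hdiss : ∀ t : ℝ, 0 ≤ t → ⟪f t, f' t⟫ ≤ b t * ‖f t‖) :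
    ∀ t : ℝ, 0 ≤ t → ‖f t‖ ≤ B t := by
  intro t ht
  refine le_of_forall_pos_le_add fun ε hε => ?_
  set ψ : ℝ → ℝ := fun s => Real.sqrt (ε ^ 2 + ⟪f s, f s⟫) - B s with hψdef
  have hupos : ∀ s : ℝ, 0 < ε ^ 2 + ⟪f s, f s⟫ := fun s => by
    have h0 : (0:ℝ) ≤ ⟪f s, f s⟫ := real_inner_self_nonneg
    positivity
  have hfle : ∀ s : ℝ, ‖f s‖ ≤ Real.sqrt (ε ^ 2 + ⟪f s, f s⟫) := by
    intro s
    have h4 : ⟪f s, f s⟫ = ‖f s‖ ^ 2 := real_inner_self_eq_norm_sq _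
    calc ‖f s‖ = Real.sqrt (‖f s‖ ^ 2) := (Real.sqrt_sq (norm_nonneg _)).symm
      _ ≤ _ := by rw [h4]; exact Real.sqrt_le_sqrt (by nlinarith [sq_nonneg ε])
  have hψ : ∀ s : ℝ, 0 ≤ s → HasDerivAt ψ
      (1 / (2 * Real.sqrt (ε ^ 2 + ⟪f s, f s⟫)) * (⟪f s, f' s⟫ + ⟪f' s, f s⟫) - b s) s := by
    intro s hs
    have h1 : HasDerivAt (fun u : ℝ => ε ^ 2 + ⟪f u, f u⟫) (⟪f s, f' s⟫ + ⟪f' s, f s⟫) s := by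
      have := (hasDerivAt_const s (ε ^ 2)).add ((hf s hs).inner ℝ (hf s hs))
      simp only [zero_add] at this
      exact this
    have h2 := (Real.hasDerivAt_sqrt (ne_of_gt (hupos s))).comp s h1
    have h2' : HasDerivAt (fun u : ℝ => Real.sqrt (ε ^ 2 + ⟪f u, f u⟫))
        (1 / (2 * Real.sqrt (ε ^ 2 + ⟪f s, f s⟫)) * (⟪f s, f' s⟫ + ⟪f' s, f s⟫)) s := by
      simpa [Function.comp_def] using h2
    exact h2'.sub (hB s hs)
  have hanti : AntitoneOn ψ (Set.Ici 0) := by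
    apply antitoneOn_of_deriv_nonpos (convex_Ici 0)
    · exact fun x hx => ((hψ x hx).continuousAt).continuousWithinAt
    · intro x hx
      rw [interior_Ici] at hx
      exact ((hψ x hx.le).differentiableAt).differentiableWithinAt
    · intro x hx
      rw [interior_Ici] at hx
      rw [(hψ x hx.le).deriv]
      have hS : 0 < Real.sqrt (ε ^ 2 + ⟪f x, f x⟫) := Real.sqrt_pos.mpr (hupos x)
      have h3 : ⟪f' x, f x⟫ = ⟪f x, f' x⟫ := real_inner_comm _ _
      have h2 := hdiss x hx.le
      have h5 := hfle x
      have h6 := hb x hx.le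
      rw [h3]
      rw [sub_nonpos, div_mul_eq_mul_div, div_le_iff₀ (by linarith)]
      nlinarith
  have hmono := hanti Set.self_mem_Ici ht ht
  have hψ0 : ψ 0 = ε := by
    simp [hψdef, hf0, hB0, inner_zero_left, Real.sqrt_sq hε.le]
  rw [hψ0] at hmono
  have := hfle t
  simp only [hψdef] at hmono
  linarith

lemma abstract_discrepancy {E F : Type*} [NormedAddCommGroup E] [InnerProductSpace ℝ E]
    [NormedAddCommGroup F] [InnerProductSpace ℝ F]
    (lam₀ η₀ σ σ' A₀ : ℝ) (hlam₀ : 0 < lam₀) (hη₀ : 0 < η₀) (hσ0 : 0 ≤ σ)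
    (hσlt : σ < lam₀) (hσ' : 0 ≤ σ') (hA₀ : 0 ≤ A₀)
    (Gl G : ℝ → E) (Gl' G' : ℝ → E) (Pl P : ℝ → F) (Pl' P' : ℝ → F)
    (hGl : ∀ t : ℝ, 0 ≤ t → HasDerivAt Gl (Gl' t) t)
    (hG : ∀ t : ℝ, 0 ≤ t → HasDerivAt G (G' t) t)
    (hPl : ∀ t : ℝ, 0 ≤ t → HasDerivAt Pl (Pl' t) t)
    (hP : ∀ t : ℝ, 0 ≤ t → HasDerivAt P (P' t) t)
    (hG0 : Gl 0 = G 0) (hP0 : Pl 0 = P 0)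
    (h1 : ∀ s : ℝ, 0 ≤ s → ⟪Gl s, Gl' s⟫ ≤ -(η₀ * lam₀) * ‖Gl s‖ ^ 2)
    (h2 : ∀ s : ℝ, 0 ≤ s → ⟪G s - Gl s, G' s - Gl' s⟫ ≤
      -(η₀ * (lam₀ - σ)) * ‖G s - Gl s‖ ^ 2 + η₀ * σ * ‖Gl s‖ * ‖G s - Gl s‖)
    (h3 : ∀ s : ℝ, 0 ≤ s → ‖Pl' s - P' s‖ ≤ η₀ * σ' * ‖Gl s‖ + η₀ * (A₀ + σ') * ‖G s - Gl s‖) :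
    ∀ t : ℝ, 0 ≤ t → ‖Pl t - P t‖ ≤ ‖Gl 0‖ * (σ' / lam₀ + σ * (A₀ + σ') / (lam₀ - σ) ^ 2) := by
  have hls : (0:ℝ) < lam₀ - σ := by linarith
  set α : ℝ := η₀ * lam₀ with hα
  set μ : ℝ := η₀ * (lam₀ - σ) with hμ
  have hαpos : 0 < α := mul_pos hη₀ hlam₀
  have hμpos : 0 < μ := mul_pos hη₀ hls
  set n0 : ℝ := ‖Gl 0‖ with hn0
  have hn0nn : 0 ≤ n0 := norm_nonneg _
  -- step 1 : decay of Gl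
  have decay : ∀ s : ℝ, 0 ≤ s → ‖Gl s‖ ≤ Real.exp (-α * s) * n0 := by
    have h1' : ∀ s : ℝ, 0 ≤ s → ⟪Gl s, Gl' s⟫ ≤ -α * ‖Gl s‖ ^ 2 := by
      intro s hs; simpa [hα, neg_mul] using h1 s hs
    exact gronwall_decay Gl Gl' α hGl h1'
  -- step 2 : bound on D = G - Gl
  set D : ℝ → E := fun s => G s - Gl s with hD
  have hDd : ∀ s : ℝ, 0 ≤ s → HasDerivAt D (G' s - Gl' s) s :=
    fun s hs => (hG s hs).sub (hGl s hs)
  have hexp : ∀ (k s : ℝ), HasDerivAt (fun u : ℝ => Real.exp (k * u)) (Real.exp (k * s) * k) s :=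
    fun k s => by simpa using ((hasDerivAt_id s).const_mul k).exp
  set h : ℝ → E := fun s => Real.exp (μ * s) • D s with hh
  have hhd : ∀ s : ℝ, 0 ≤ s →
      HasDerivAt h (Real.exp (μ * s) • (G' s - Gl' s) + (Real.exp (μ * s) * μ) • D s) s :=
    fun s hs => (hexp μ s).smul (hDd s hs)
  have hnh : ∀ s : ℝ, ‖h s‖ = Real.exp (μ * s) * ‖D s‖ := by
    intro s; simp [hh, norm_smul, Real.abs_exp]
  have hhdiss : ∀ s : ℝ, 0 ≤ s →
      ⟪h s, Real.exp (μ * s) • (G' s - Gl' s) + (Real.exp (μ * s) * μ) • D s⟫ ≤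
        (η₀ * σ * n0) * ‖h s‖ := by
    intro s hs
    have hip : ⟪h s, Real.exp (μ * s) • (G' s - Gl' s) + (Real.exp (μ * s) * μ) • D s⟫
        = Real.exp (μ * s) ^ 2 * ⟪D s, G' s - Gl' s⟫
          + Real.exp (μ * s) ^ 2 * μ * ⟪D s, D s⟫ := by
      simp only [hh, inner_add_right, real_inner_smul_left, real_inner_smul_right]
      ring
    rw [hip, hnh s, real_inner_self_eq_norm_sq]
    have e2 := h2 s hs
    have hepos : (0:ℝ) < Real.exp (μ * s) := Real.exp_pos _
    have hd0 : (0:ℝ) ≤ ‖D s‖ := norm_nonneg _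
    have step1 : Real.exp (μ * s) ^ 2 * ⟪D s, G' s - Gl' s⟫
          + Real.exp (μ * s) ^ 2 * μ * ‖D s‖ ^ 2
        ≤ Real.exp (μ * s) ^ 2 * (η₀ * σ * ‖Gl s‖ * ‖D s‖) := by
      have := mul_le_mul_of_nonneg_left e2 (sq_nonneg (Real.exp (μ * s)))
      nlinarith [this]
    refine step1.trans ?_
    have h1' : Real.exp (μ * s) * Real.exp (-α * s) ≤ 1 := by
      rw [← Real.exp_add]
      rw [Real.exp_le_one_iff]
      have : μ * s + -α * s = -(η₀ * σ * s) := by rw [hα, hμ]; ring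
      rw [this]
      have : 0 ≤ η₀ * σ * s := mul_nonneg (mul_nonneg hη₀.le hσ0) hs
      linarith
    have c1 : Real.exp (μ * s) ^ 2 * ‖Gl s‖ ≤ Real.exp (μ * s) * n0 := by
      calc Real.exp (μ * s) ^ 2 * ‖Gl s‖
          ≤ Real.exp (μ * s) ^ 2 * (Real.exp (-α * s) * n0) :=
            mul_le_mul_of_nonneg_left (decay s hs) (by positivity)
        _ = (Real.exp (μ * s) * n0) * (Real.exp (μ * s) * Real.exp (-α * s)) := by ring
        _ ≤ (Real.exp (μ * s) * n0) * 1 :=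
            mul_le_mul_of_nonneg_left h1' (by positivity)
        _ = Real.exp (μ * s) * n0 := mul_one _
    have hcoef : (0:ℝ) ≤ η₀ * σ * ‖D s‖ := mul_nonneg (mul_nonneg hη₀.le hσ0) hd0
    calc Real.exp (μ * s) ^ 2 * (η₀ * σ * ‖Gl s‖ * ‖D s‖)
        = (η₀ * σ * ‖D s‖) * (Real.exp (μ * s) ^ 2 * ‖Gl s‖) := by ring
      _ ≤ (η₀ * σ * ‖D s‖) * (Real.exp (μ * s) * n0) := mul_le_mul_of_nonneg_left c1 hcoef
      _ = (η₀ * σ * n0) * (Real.exp (μ * s) * ‖D s‖) := by ring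
  have hh0 : h 0 = 0 := by
    simp [hh, hD, hG0]
  have hhb : ∀ s : ℝ, 0 ≤ s → ‖h s‖ ≤ η₀ * σ * n0 * s := by
    have hbnn : ∀ s : ℝ, 0 ≤ s → (0:ℝ) ≤ η₀ * σ * n0 :=
      fun s _ => mul_nonneg (mul_nonneg hη₀.le hσ0) hn0nn
    have hBd : ∀ s : ℝ, 0 ≤ s → HasDerivAt (fun u : ℝ => η₀ * σ * n0 * u) (η₀ * σ * n0) s :=
      fun s _ => by simpa using (hasDerivAt_id s).const_mul (η₀ * σ * n0)
    exact gronwall_linear h _ (fun _ => η₀ * σ * n0) (fun u => η₀ * σ * n0 * u)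
      hhd hh0 hbnn hBd (by simp) hhdiss
  have hDb : ∀ s : ℝ, 0 ≤ s → ‖D s‖ ≤ η₀ * σ * n0 * (s * Real.exp (-μ * s)) := by
    intro s hs
    have hb := hhb s hs
    rw [hnh s] at hb
    have hee : Real.exp (-μ * s) * Real.exp (μ * s) = 1 := by
      rw [← Real.exp_add, show -μ * s + μ * s = 0 by ring, Real.exp_zero]
    calc ‖D s‖ = (Real.exp (-μ * s) * Real.exp (μ * s)) * ‖D s‖ := by rw [hee, one_mul]
      _ = Real.exp (-μ * s) * (Real.exp (μ * s) * ‖D s‖) := by ring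
      _ ≤ Real.exp (-μ * s) * (η₀ * σ * n0 * s) :=
          mul_le_mul_of_nonneg_left hb (Real.exp_nonneg _)
      _ = η₀ * σ * n0 * (s * Real.exp (-μ * s)) := by ring
  -- step 3 : bound on Q = Pl - P
  set K₁ : ℝ := η₀ * σ' * n0 with hK₁
  set K₂ : ℝ := η₀ * (A₀ + σ') * (η₀ * σ * n0) with hK₂
  have hK₁nn : 0 ≤ K₁ := mul_nonneg (mul_nonneg hη₀.le hσ') hn0nn
  have hK₂nn : 0 ≤ K₂ := by
    apply mul_nonneg (mul_nonneg hη₀.le (by linarith))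
    exact mul_nonneg (mul_nonneg hη₀.le hσ0) hn0nn
  set b : ℝ → ℝ := fun s => K₁ * Real.exp (-α * s) + K₂ * (s * Real.exp (-μ * s)) with hbdef
  set B : ℝ → ℝ := fun s =>
    K₁ / α * (1 - Real.exp (-α * s))
      + K₂ / μ ^ 2 * (1 - Real.exp (-μ * s) - μ * (s * Real.exp (-μ * s))) with hBdef
  have hbnn : ∀ s : ℝ, 0 ≤ s → 0 ≤ b s := by
    intro s hs
    have t1 : (0:ℝ) ≤ K₁ * Real.exp (-α * s) := mul_nonneg hK₁nn (Real.exp_nonneg _)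
    have t2 : (0:ℝ) ≤ K₂ * (s * Real.exp (-μ * s)) :=
      mul_nonneg hK₂nn (mul_nonneg hs (Real.exp_nonneg _))
    simp only [hbdef]; linarith
  have hBd : ∀ s : ℝ, 0 ≤ s → HasDerivAt B (b s) s := by
    intro s _
    have e1 : HasDerivAt (fun u : ℝ => Real.exp (-α * u)) (Real.exp (-α * s) * (-α)) s := hexp _ _
    have e2 : HasDerivAt (fun u : ℝ => Real.exp (-μ * u)) (Real.exp (-μ * s) * (-μ)) s := hexp _ _
    have e3 : HasDerivAt (fun u : ℝ => u * Real.exp (-μ * u))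
        (1 * Real.exp (-μ * s) + s * (Real.exp (-μ * s) * (-μ))) s := (hasDerivAt_id s).mul e2
    have e4 : HasDerivAt B
        (K₁ / α * (0 - Real.exp (-α * s) * (-α))
          + K₂ / μ ^ 2 * (0 - Real.exp (-μ * s) * (-μ)
            - μ * (1 * Real.exp (-μ * s) + s * (Real.exp (-μ * s) * (-μ))))) s :=
      (((hasDerivAt_const s (1:ℝ)).sub e1).const_mul (K₁ / α)).add
        ((((hasDerivAt_const s (1:ℝ)).sub e2).sub (e3.const_mul μ)).const_mul (K₂ / μ ^ 2))
    convert e4 using 1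
    simp only [hbdef]
    field_simp
    ring
  have hB0 : B 0 = 0 := by
    simp [hBdef]
  set Q : ℝ → F := fun s => Pl s - P s with hQ
  have hQd : ∀ s : ℝ, 0 ≤ s → HasDerivAt Q (Pl' s - P' s) s :=
    fun s hs => (hPl s hs).sub (hP s hs)
  have hQnorm : ∀ s : ℝ, 0 ≤ s → ‖Pl' s - P' s‖ ≤ b s := by
    intro s hs
    calc ‖Pl' s - P' s‖ ≤ η₀ * σ' * ‖Gl s‖ + η₀ * (A₀ + σ') * ‖G s - Gl s‖ := h3 s hs
      _ ≤ η₀ * σ' * (Real.exp (-α * s) * n0)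
            + η₀ * (A₀ + σ') * (η₀ * σ * n0 * (s * Real.exp (-μ * s))) :=
          add_le_add
            (mul_le_mul_of_nonneg_left (decay s hs) (mul_nonneg hη₀.le hσ'))
            (mul_le_mul_of_nonneg_left (hDb s hs) (mul_nonneg hη₀.le (by linarith)))
      _ = b s := by simp only [hbdef, hK₁, hK₂]; ring
  have hQdiss : ∀ s : ℝ, 0 ≤ s → ⟪Q s, Pl' s - P' s⟫ ≤ b s * ‖Q s‖ := by
    intro s hs
    calc ⟪Q s, Pl' s - P' s⟫ ≤ ‖Q s‖ * ‖Pl' s - P' s‖ := real_inner_le_norm _ _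
      _ ≤ ‖Q s‖ * b s := mul_le_mul_of_nonneg_left (hQnorm s hs) (norm_nonneg _)
      _ = b s * ‖Q s‖ := mul_comm _ _
  have hQ0 : Q 0 = 0 := by simp [hQ, hP0]
  have hQb := gronwall_linear Q (fun s => Pl' s - P' s) b B hQd hQ0 hbnn hBd hB0 hQdiss
  intro t ht
  have hQt := hQb t ht
  have hBle : B t ≤ K₁ / α + K₂ / μ ^ 2 := by
    have hb1 : 1 - Real.exp (-α * t) ≤ 1 := by linarith [Real.exp_nonneg (-α * t)]
    have hb2 : 1 - Real.exp (-μ * t) - μ * (t * Real.exp (-μ * t)) ≤ 1 := by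
      have := Real.exp_nonneg (-μ * t)
      have : 0 ≤ μ * (t * Real.exp (-μ * t)) :=
        mul_nonneg hμpos.le (mul_nonneg ht (Real.exp_nonneg _))
      linarith [Real.exp_nonneg (-μ * t)]
    have hk1 : 0 ≤ K₁ / α := div_nonneg hK₁nn hαpos.le
    have hk2 : 0 ≤ K₂ / μ ^ 2 := div_nonneg hK₂nn (sq_nonneg μ)
    calc B t ≤ K₁ / α * 1 + K₂ / μ ^ 2 * 1 := by
          simp only [hBdef]
          exact add_le_add (mul_le_mul_of_nonneg_left hb1 hk1) (mul_le_mul_of_nonneg_left hb2 hk2)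
      _ = K₁ / α + K₂ / μ ^ 2 := by ring
  have hfinal : K₁ / α + K₂ / μ ^ 2 = n0 * (σ' / lam₀ + σ * (A₀ + σ') / (lam₀ - σ) ^ 2) := by
    rw [hK₁, hK₂, hα, hμ]
    field_simp
  calc ‖Pl t - P t‖ = ‖Q t‖ := by rw [hQ]
    _ ≤ B t := hQt
    _ ≤ K₁ / α + K₂ / μ ^ 2 := hBle
    _ = n0 * (σ' / lam₀ + σ * (A₀ + σ') / (lam₀ - σ) ^ 2) := hfinal

/-- Uniform-in-time bound on the discrepancy between the test-point
residuals `p` (driven by the time-dependent cross kernel `a(t)` and residual `g`) and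
`p^lin` (driven by the frozen cross kernel `a₀` and linearized residual `g^lin`):
`‖p^lin(t) − p(t)‖₂ ≤ ‖g(0)‖₂ (σ′/λ₀ + σ(‖a₀‖_op + σ′)/(λ₀ − σ)²)`. -/
theorem test_residual_discrepancy_bound {N m : ℕ}
    (Θ₀ : Matrix (Fin N) (Fin N) ℝ) (hΘ₀sym : Θ₀.IsSymm)
    (lam₀ : ℝ) (hlam₀ : 0 < lam₀)
    (hΘ₀lb : ∀ v : Fin N → ℝ, lam₀ * l2norm v ^ 2 ≤ v ⬝ᵥ Θ₀.mulVec v)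
    (η₀ σ σ' : ℝ) (hη₀ : 0 < η₀) (hσ0 : 0 ≤ σ) (hσlt : σ < lam₀) (hσ' : 0 ≤ σ')
    (Θ : ℝ → Matrix (Fin N) (Fin N) ℝ) (hΘcont : ContinuousOn Θ (Set.Ici 0))
    (hΘclose : ∀ s : ℝ, 0 ≤ s → l2OpNorm (Θ s - Θ₀) ≤ σ)
    (a₀ : Matrix (Fin m) (Fin N) ℝ)
    (a : ℝ → Matrix (Fin m) (Fin N) ℝ) (hacont : ContinuousOn a (Set.Ici 0))
    (haclose : ∀ s : ℝ, 0 ≤ s → l2OpNorm (a s - a₀) ≤ σ')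
    (glin g : ℝ → (Fin N → ℝ))
    (hglin : ∀ t : ℝ, 0 ≤ t → HasDerivAt glin (-(η₀ • Θ₀.mulVec (glin t))) t)
    (hgf : ∀ t : ℝ, 0 ≤ t → HasDerivAt g (-(η₀ • (Θ t).mulVec (g t))) t)
    (hg0 : glin 0 = g 0)
    (plin p : ℝ → (Fin m → ℝ))
    (hplin : ∀ t : ℝ, 0 ≤ t → HasDerivAt plin (-(η₀ • a₀.mulVec (glin t))) t)
    (hpf : ∀ t : ℝ, 0 ≤ t → HasDerivAt p (-(η₀ • (a t).mulVec (g t))) t)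
    (hp0 : plin 0 = p 0) :
    ∀ t : ℝ, 0 ≤ t →
      l2norm (plin t - p t) ≤
        l2norm (g 0) * (σ' / lam₀ + σ * (l2OpNorm a₀ + σ') / (lam₀ - σ) ^ 2) := by
  have hA₀ : (0:ℝ) ≤ l2OpNorm a₀ := norm_nonneg _
  -- derivative lifts
  have hGl : ∀ t : ℝ, 0 ≤ t → HasDerivAt (fun s => (WithLp.equiv 2 (Fin N → ℝ)).symm (glin s))
      (-(η₀ • (WithLp.equiv 2 (Fin N → ℝ)).symm (Θ₀ *ᵥ glin t))) t := by
    intro t ht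
    have := aux_deriv glin _ t (hglin t ht)
    simpa [wl_equiv_symm_neg, wl_equiv_symm_smul] using this
  have hG : ∀ t : ℝ, 0 ≤ t → HasDerivAt (fun s => (WithLp.equiv 2 (Fin N → ℝ)).symm (g s))
      (-(η₀ • (WithLp.equiv 2 (Fin N → ℝ)).symm (Θ t *ᵥ g t))) t := by
    intro t ht
    have := aux_deriv g _ t (hgf t ht)
    simpa [wl_equiv_symm_neg, wl_equiv_symm_smul] using this
  have hPl : ∀ t : ℝ, 0 ≤ t → HasDerivAt (fun s => (WithLp.equiv 2 (Fin m → ℝ)).symm (plin s))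
      (-(η₀ • (WithLp.equiv 2 (Fin m → ℝ)).symm (a₀ *ᵥ glin t))) t := by
    intro t ht
    have := aux_deriv plin _ t (hplin t ht)
    simpa [wl_equiv_symm_neg, wl_equiv_symm_smul] using this
  have hP : ∀ t : ℝ, 0 ≤ t → HasDerivAt (fun s => (WithLp.equiv 2 (Fin m → ℝ)).symm (p s))
      (-(η₀ • (WithLp.equiv 2 (Fin m → ℝ)).symm (a t *ᵥ g t))) t := by
    intro t ht
    have := aux_deriv p _ t (hpf t ht)
    simpa [wl_equiv_symm_neg, wl_equiv_symm_smul] using this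
  -- dissipativity of glin
  have h1 : ∀ s : ℝ, 0 ≤ s →
      ⟪(WithLp.equiv 2 (Fin N → ℝ)).symm (glin s),
        -(η₀ • (WithLp.equiv 2 (Fin N → ℝ)).symm (Θ₀ *ᵥ glin s))⟫ ≤
      -(η₀ * lam₀) * ‖(WithLp.equiv 2 (Fin N → ℝ)).symm (glin s)‖ ^ 2 := by
    intro s hs
    have hq := hΘ₀lb (glin s)
    rw [aux_inner, aux_norm] at hq
    rw [inner_neg_right, real_inner_smul_right]
    have := mul_le_mul_of_nonneg_left hq hη₀.le
    nlinarith [this]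
  -- dissipativity of the difference
  have h2 : ∀ s : ℝ, 0 ≤ s →
      ⟪(WithLp.equiv 2 (Fin N → ℝ)).symm (g s) - (WithLp.equiv 2 (Fin N → ℝ)).symm (glin s),
        -(η₀ • (WithLp.equiv 2 (Fin N → ℝ)).symm (Θ s *ᵥ g s)) -
          -(η₀ • (WithLp.equiv 2 (Fin N → ℝ)).symm (Θ₀ *ᵥ glin s))⟫ ≤
      -(η₀ * (lam₀ - σ)) *
          ‖(WithLp.equiv 2 (Fin N → ℝ)).symm (g s) - (WithLp.equiv 2 (Fin N → ℝ)).symm (glin s)‖ ^ 2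
        + η₀ * σ * ‖(WithLp.equiv 2 (Fin N → ℝ)).symm (glin s)‖ *
          ‖(WithLp.equiv 2 (Fin N → ℝ)).symm (g s) -
            (WithLp.equiv 2 (Fin N → ℝ)).symm (glin s)‖ := by
    intro s hs
    have hsplit : Θ s *ᵥ g s - Θ₀ *ᵥ glin s =
        Θ₀ *ᵥ (g s - glin s) +
          ((Θ s - Θ₀) *ᵥ (g s - glin s) + (Θ s - Θ₀) *ᵥ glin s) := by
      simp only [Matrix.mulVec_sub, Matrix.sub_mulVec]
      abel
    have hDeq : (WithLp.equiv 2 (Fin N → ℝ)).symm (g s) -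
          (WithLp.equiv 2 (Fin N → ℝ)).symm (glin s)
        = (WithLp.equiv 2 (Fin N → ℝ)).symm (g s - glin s) :=
      (wl_equiv_symm_sub _ _ _).symm
    have hder : -(η₀ • (WithLp.equiv 2 (Fin N → ℝ)).symm (Θ s *ᵥ g s)) -
          -(η₀ • (WithLp.equiv 2 (Fin N → ℝ)).symm (Θ₀ *ᵥ glin s))
        = -(η₀ • ((WithLp.equiv 2 (Fin N → ℝ)).symm (Θ₀ *ᵥ (g s - glin s)) +
            ((WithLp.equiv 2 (Fin N → ℝ)).symm ((Θ s - Θ₀) *ᵥ (g s - glin s)) +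
              (WithLp.equiv 2 (Fin N → ℝ)).symm ((Θ s - Θ₀) *ᵥ glin s)))) := by
      rw [← wl_equiv_symm_add, ← wl_equiv_symm_add, ← hsplit,
        wl_equiv_symm_sub, smul_sub]
      abel
    rw [hder, hDeq, inner_neg_right, real_inner_smul_right, inner_add_right, inner_add_right]
    have hT1 : lam₀ * ‖(WithLp.equiv 2 (Fin N → ℝ)).symm (g s - glin s)‖ ^ 2 ≤
        ⟪(WithLp.equiv 2 (Fin N → ℝ)).symm (g s - glin s),
          (WithLp.equiv 2 (Fin N → ℝ)).symm (Θ₀ *ᵥ (g s - glin s))⟫ := by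
      have := hΘ₀lb (g s - glin s)
      rwa [aux_inner, aux_norm] at this
    have hyn : ‖(WithLp.equiv 2 (Fin N → ℝ)).symm ((Θ s - Θ₀) *ᵥ (g s - glin s))‖ ≤
        σ * ‖(WithLp.equiv 2 (Fin N → ℝ)).symm (g s - glin s)‖ :=
      (aux_op _ _).trans (mul_le_mul_of_nonneg_right (hΘclose s hs) (norm_nonneg _))
    have hzn : ‖(WithLp.equiv 2 (Fin N → ℝ)).symm ((Θ s - Θ₀) *ᵥ glin s)‖ ≤
        σ * ‖(WithLp.equiv 2 (Fin N → ℝ)).symm (glin s)‖ :=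
      (aux_op _ _).trans (mul_le_mul_of_nonneg_right (hΘclose s hs) (norm_nonneg _))
    have hT2 : -(‖(WithLp.equiv 2 (Fin N → ℝ)).symm (g s - glin s)‖ *
          (σ * ‖(WithLp.equiv 2 (Fin N → ℝ)).symm (g s - glin s)‖)) ≤
        ⟪(WithLp.equiv 2 (Fin N → ℝ)).symm (g s - glin s),
          (WithLp.equiv 2 (Fin N → ℝ)).symm ((Θ s - Θ₀) *ᵥ (g s - glin s))⟫ := by
      have habs := abs_real_inner_le_norm
        ((WithLp.equiv 2 (Fin N → ℝ)).symm (g s - glin s))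
        ((WithLp.equiv 2 (Fin N → ℝ)).symm ((Θ s - Θ₀) *ᵥ (g s - glin s)))
      have h1' := (abs_le.mp habs).1
      have h2' := mul_le_mul_of_nonneg_left hyn
        (norm_nonneg ((WithLp.equiv 2 (Fin N → ℝ)).symm (g s - glin s)))
      linarith
    have hT3 : -(‖(WithLp.equiv 2 (Fin N → ℝ)).symm (g s - glin s)‖ *
          (σ * ‖(WithLp.equiv 2 (Fin N → ℝ)).symm (glin s)‖)) ≤
        ⟪(WithLp.equiv 2 (Fin N → ℝ)).symm (g s - glin s),
          (WithLp.equiv 2 (Fin N → ℝ)).symm ((Θ s - Θ₀) *ᵥ glin s)⟫ := by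
      have habs := abs_real_inner_le_norm
        ((WithLp.equiv 2 (Fin N → ℝ)).symm (g s - glin s))
        ((WithLp.equiv 2 (Fin N → ℝ)).symm ((Θ s - Θ₀) *ᵥ glin s))
      have h1' := (abs_le.mp habs).1
      have h2' := mul_le_mul_of_nonneg_left hzn
        (norm_nonneg ((WithLp.equiv 2 (Fin N → ℝ)).symm (g s - glin s)))
      linarith
    have hsum : lam₀ * ‖(WithLp.equiv 2 (Fin N → ℝ)).symm (g s - glin s)‖ ^ 2
          - ‖(WithLp.equiv 2 (Fin N → ℝ)).symm (g s - glin s)‖ *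
              (σ * ‖(WithLp.equiv 2 (Fin N → ℝ)).symm (g s - glin s)‖)
          - ‖(WithLp.equiv 2 (Fin N → ℝ)).symm (g s - glin s)‖ *
              (σ * ‖(WithLp.equiv 2 (Fin N → ℝ)).symm (glin s)‖) ≤
        ⟪(WithLp.equiv 2 (Fin N → ℝ)).symm (g s - glin s),
          (WithLp.equiv 2 (Fin N → ℝ)).symm (Θ₀ *ᵥ (g s - glin s))⟫ +
        (⟪(WithLp.equiv 2 (Fin N → ℝ)).symm (g s - glin s),
          (WithLp.equiv 2 (Fin N → ℝ)).symm ((Θ s - Θ₀) *ᵥ (g s - glin s))⟫ +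
         ⟪(WithLp.equiv 2 (Fin N → ℝ)).symm (g s - glin s),
          (WithLp.equiv 2 (Fin N → ℝ)).symm ((Θ s - Θ₀) *ᵥ glin s)⟫) := by
      linarith
    nlinarith [mul_le_mul_of_nonneg_left hsum hη₀.le]
  -- norm bound on the difference of the p-derivatives
  have h3 : ∀ s : ℝ, 0 ≤ s →
      ‖-(η₀ • (WithLp.equiv 2 (Fin m → ℝ)).symm (a₀ *ᵥ glin s)) -
        -(η₀ • (WithLp.equiv 2 (Fin m → ℝ)).symm (a s *ᵥ g s))‖ ≤
      η₀ * σ' * ‖(WithLp.equiv 2 (Fin N → ℝ)).symm (glin s)‖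
        + η₀ * (l2OpNorm a₀ + σ') *
          ‖(WithLp.equiv 2 (Fin N → ℝ)).symm (g s) -
            (WithLp.equiv 2 (Fin N → ℝ)).symm (glin s)‖ := by
    intro s hs
    have hvec : a s *ᵥ g s - a₀ *ᵥ glin s =
        (a s - a₀) *ᵥ glin s + a s *ᵥ (g s - glin s) := by
      simp only [Matrix.mulVec_sub, Matrix.sub_mulVec]
      abel
    have hder : -(η₀ • (WithLp.equiv 2 (Fin m → ℝ)).symm (a₀ *ᵥ glin s)) -
          -(η₀ • (WithLp.equiv 2 (Fin m → ℝ)).symm (a s *ᵥ g s))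
        = η₀ • ((WithLp.equiv 2 (Fin m → ℝ)).symm ((a s - a₀) *ᵥ glin s) +
            (WithLp.equiv 2 (Fin m → ℝ)).symm (a s *ᵥ (g s - glin s))) := by
      rw [← wl_equiv_symm_add, ← hvec, wl_equiv_symm_sub, smul_sub]
      abel
    rw [hder]
    have hn1 : ‖(WithLp.equiv 2 (Fin m → ℝ)).symm ((a s - a₀) *ᵥ glin s)‖ ≤
        σ' * ‖(WithLp.equiv 2 (Fin N → ℝ)).symm (glin s)‖ :=
      (aux_op _ _).trans (mul_le_mul_of_nonneg_right (haclose s hs) (norm_nonneg _))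
    have hops : l2OpNorm (a s) ≤ l2OpNorm a₀ + σ' :=
      (aux_op_triangle _ _).trans (by linarith [haclose s hs])
    have hn2 : ‖(WithLp.equiv 2 (Fin m → ℝ)).symm (a s *ᵥ (g s - glin s))‖ ≤
        (l2OpNorm a₀ + σ') *
          ‖(WithLp.equiv 2 (Fin N → ℝ)).symm (g s) -
            (WithLp.equiv 2 (Fin N → ℝ)).symm (glin s)‖ := by
      have h := aux_op (a s) (g s - glin s)
      rw [wl_equiv_symm_sub] at h
      exact h.trans (mul_le_mul_of_nonneg_right hops (norm_nonneg _))
    calc ‖η₀ • ((WithLp.equiv 2 (Fin m → ℝ)).symm ((a s - a₀) *ᵥ glin s) +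
            (WithLp.equiv 2 (Fin m → ℝ)).symm (a s *ᵥ (g s - glin s)))‖
        = η₀ * ‖(WithLp.equiv 2 (Fin m → ℝ)).symm ((a s - a₀) *ᵥ glin s) +
            (WithLp.equiv 2 (Fin m → ℝ)).symm (a s *ᵥ (g s - glin s))‖ := by
          rw [norm_smul, Real.norm_eq_abs, abs_of_pos hη₀]
      _ ≤ η₀ * (‖(WithLp.equiv 2 (Fin m → ℝ)).symm ((a s - a₀) *ᵥ glin s)‖ +
            ‖(WithLp.equiv 2 (Fin m → ℝ)).symm (a s *ᵥ (g s - glin s))‖) :=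
          mul_le_mul_of_nonneg_left (norm_add_le _ _) hη₀.le
      _ ≤ η₀ * (σ' * ‖(WithLp.equiv 2 (Fin N → ℝ)).symm (glin s)‖ +
            (l2OpNorm a₀ + σ') *
              ‖(WithLp.equiv 2 (Fin N → ℝ)).symm (g s) -
                (WithLp.equiv 2 (Fin N → ℝ)).symm (glin s)‖) :=
          mul_le_mul_of_nonneg_left (add_le_add hn1 hn2) hη₀.le
      _ = _ := by ring
  have hG0 : (WithLp.equiv 2 (Fin N → ℝ)).symm (glin 0) =
      (WithLp.equiv 2 (Fin N → ℝ)).symm (g 0) := by rw [hg0]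
  have hP0 : (WithLp.equiv 2 (Fin m → ℝ)).symm (plin 0) =
      (WithLp.equiv 2 (Fin m → ℝ)).symm (p 0) := by rw [hp0]
  have key := abstract_discrepancy lam₀ η₀ σ σ' (l2OpNorm a₀) hlam₀ hη₀ hσ0 hσlt hσ' hA₀
    (fun s => (WithLp.equiv 2 (Fin N → ℝ)).symm (glin s))
    (fun s => (WithLp.equiv 2 (Fin N → ℝ)).symm (g s))
    (fun s => -(η₀ • (WithLp.equiv 2 (Fin N → ℝ)).symm (Θ₀ *ᵥ glin s)))
    (fun s => -(η₀ • (WithLp.equiv 2 (Fin N → ℝ)).symm (Θ s *ᵥ g s)))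
    (fun s => (WithLp.equiv 2 (Fin m → ℝ)).symm (plin s))
    (fun s => (WithLp.equiv 2 (Fin m → ℝ)).symm (p s))
    (fun s => -(η₀ • (WithLp.equiv 2 (Fin m → ℝ)).symm (a₀ *ᵥ glin s)))
    (fun s => -(η₀ • (WithLp.equiv 2 (Fin m → ℝ)).symm (a s *ᵥ g s)))
    hGl hG hPl hP hG0 hP0 h1 h2 h3
  intro t ht
  have hk := key t ht
  rw [aux_norm (plin t - p t), aux_norm (g 0), wl_equiv_symm_sub, ← hg0]
  exact hk
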